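/- Let α ∈ ℂ and let φ, ψ : ℂ → ℂ be entire functions satisfying ψ''(x) = (2x − 2ψ(x)φ(x))·ψ(x), φ''(x) = (2x − 2ψ(x)φ(x))·φ(x), and φ'(x)ψ(x) − φ(x)ψ'(x) = 2α for all x ∈ ℂ. Define a_n, b_n by a_0 = φ, a_n = a_{n-1}' + ψ·(∑_{i+j=n-2, i,j≥0} a_i a_j), b_0 = ψ, b_n = b_{n-1}' + φ·(∑_{i+j=n-2, i,j≥0} b_i b_j). Then the generating functions formally satisfy the Riccati equation in t, 2t F_t = −(ψ' − tψ)F² + ((ψ''/ψ)t + 2 − t³)F + t²(φ' + tφ), in the following coefficientwise sense: ψ·a_2 = ψ²φ² + ψ''·φ, and for every n ≥ 0, ψ·a_{n+3} = ψ²·(∑_{i+j=n+1} a_i a_j) − ψψ'·(∑_{i+j=n} a_i a_j) + ψ''·a_{n+1} + 2(n+1)·ψ·a_n; symmetrically, φ·b_2 = φ²ψ² + φ''·ψ, and for every n ≥ 0, φ·b_{n+3} = φ²·(∑_{i+j=n+1} b_i b_j) − φφ'·(∑_{i+j=n} b_i b_j) + φ''·b_{n+1} + 2(n+1)·φ·b_n.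 -/

import Mathlib

open Finset

noncomputable section
/-- Convolution `P_n = ∑_{i+j=n-1} a_i a_j` (so `P 0 = 0`). -/
def PP (a : ℕ → ℂ → ℂ) (n : ℕ) : ℂ → ℂ := fun x => ∑ k ∈ Finset.range n, a k x * a (n - 1 - k) x
/-- Triple convolution helper `W_m = ∑ P_k a_{m-1-k}`. -/
def WW (a : ℕ → ℂ → ℂ) (m : ℕ) : ℂ → ℂ := fun x => ∑ k ∈ Finset.range m, PP a k x * a (m - 1 - k) x
/-- Defect of the `t`-Riccati equation, coefficient of `t^{-n}` (flat form). -/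
def CC (φ ψ : ℂ → ℂ) (a : ℕ → ℂ → ℂ) (n : ℕ) : ℂ → ℂ := fun x =>
  a (n+3) x - (2*x - 2*ψ x*φ x) * a (n+1) x - ψ x * PP a (n+2) x
    + deriv ψ x * PP a (n+1) x - 2*((n:ℂ)+1) * a n x
/-- Auxiliary quantity (essentially `F · Θ` coefficient). -/
def QQ (φ ψ : ℂ → ℂ) (a : ℕ → ℂ → ℂ) (n : ℕ) : ℂ → ℂ := fun x =>
  PP a (n+3) x - φ x * a (n+2) x - deriv φ x * a (n+1) x - (2*x - 2*ψ x*φ x) * PP a (n+1) x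
    - ((n:ℂ)+1) * PP a n x - ψ x * WW a (n+2) x + deriv ψ x * WW a (n+1) x
end

section Main
variable {φ ψ : ℂ → ℂ} {a : ℕ → ℂ → ℂ}

theorem a_analytic (hφ : Differentiable ℂ φ) (hψ : Differentiable ℂ ψ) (ha0 : a 0 = φ)
    (ha : ∀ n : ℕ, a (n + 1) =
      deriv (a n) + fun x => ψ x * ∑ k ∈ Finset.range n, a k x * a (n - 1 - k) x) :
    ∀ n, AnalyticOnNhd ℂ (a n) Set.univ := by
  intro n
  induction n using Nat.strong_induction_on with
  | _ n IH =>
    match n with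
    | 0 => rw [ha0]; exact Complex.analyticOnNhd_univ_iff_differentiable.mpr hφ
    | (m+1) =>
      rw [ha m]
      exact ((IH m (by omega)).deriv).add
        ((Complex.analyticOnNhd_univ_iff_differentiable.mpr hψ).mul
          (Finset.analyticOnNhd_fun_sum _ (fun k hk =>
            (IH k (by simp at hk; omega)).mul (IH (m-1-k) (by omega)))))

theorem key1 (ha : ∀ n : ℕ, a (n + 1) =
      deriv (a n) + fun x => ψ x * ∑ k ∈ Finset.range n, a k x * a (n - 1 - k) x) :
    ∀ n x, a (n+1) x = deriv (a n) x + ψ x * PP a n x := by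
  intro n x; rw [ha n]; simp [PP]

theorem derivA (ha : ∀ n : ℕ, a (n + 1) =
      deriv (a n) + fun x => ψ x * ∑ k ∈ Finset.range n, a k x * a (n - 1 - k) x) :
    ∀ n x, deriv (a n) x = a (n+1) x - ψ x * PP a n x := by
  intro n x; rw [key1 ha n x]; ring

theorem hasA (hA : ∀ n, AnalyticOnNhd ℂ (a n) Set.univ)
    (ha : ∀ n : ℕ, a (n + 1) =
      deriv (a n) + fun x => ψ x * ∑ k ∈ Finset.range n, a k x * a (n - 1 - k) x) :
    ∀ n x, HasDerivAt (a n) (a (n+1) x - ψ x * PP a n x) x := by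
  intro n x
  have h := (((hA n) x (Set.mem_univ x)).differentiableAt).hasDerivAt
  rwa [derivA ha n x] at h

theorem hasP (hA : ∀ n, AnalyticOnNhd ℂ (a n) Set.univ) (ha0 : a 0 = φ)
    (ha : ∀ n : ℕ, a (n + 1) =
      deriv (a n) + fun x => ψ x * ∑ k ∈ Finset.range n, a k x * a (n - 1 - k) x) :
    ∀ m x, HasDerivAt (PP a m) (2 * PP a (m+1) x - 2 * φ x * a m x - 2 * ψ x * WW a m x) x := by
  intro m x
  have h : HasDerivAt (fun y => ∑ k ∈ Finset.range m, a k y * a (m - 1 - k) y)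
      (∑ k ∈ Finset.range m,
        ((a (k+1) x - ψ x * PP a k x) * a (m-1-k) x
          + a k x * (a (m-1-k+1) x - ψ x * PP a (m-1-k) x))) x :=
    HasDerivAt.fun_sum (fun k _ => (hasA hA ha k x).mul (hasA hA ha (m-1-k) x))
  have hval : (∑ k ∈ Finset.range m,
        ((a (k+1) x - ψ x * PP a k x) * a (m-1-k) x
          + a k x * (a (m-1-k+1) x - ψ x * PP a (m-1-k) x)))
      = 2 * PP a (m+1) x - 2 * φ x * a m x - 2 * ψ x * WW a m x := by
    rw [Finset.sum_add_distrib]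
    have h2 : (∑ k ∈ Finset.range m, a k x * (a (m-1-k+1) x - ψ x * PP a (m-1-k) x))
        = ∑ k ∈ Finset.range m, (a (k+1) x - ψ x * PP a k x) * a (m-1-k) x := by
      rw [← Finset.sum_range_reflect]
      apply Finset.sum_congr rfl
      intro k hk
      simp only [Finset.mem_range] at hk
      have e1 : m - 1 - (m - 1 - k) = k := by omega
      rw [e1]
      ring
    rw [h2]
    have hsplit : (∑ k ∈ Finset.range m, (a (k+1) x - ψ x * PP a k x) * a (m-1-k) x)
        = (∑ k ∈ Finset.range m, a (k+1) x * a (m-1-k) x) - ψ x * WW a m x := by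
      show _ = _ - ψ x * ∑ k ∈ Finset.range m, PP a k x * a (m - 1 - k) x
      rw [Finset.mul_sum, ← Finset.sum_sub_distrib]
      apply Finset.sum_congr rfl; intro k _; ring
    have hPP : PP a (m+1) x = (∑ k ∈ Finset.range m, a (k+1) x * a (m-1-k) x) + φ x * a m x := by
      show (∑ k ∈ Finset.range (m+1), a k x * a (m+1-1-k) x) = _
      rw [Finset.sum_range_succ']
      congr 1
      · apply Finset.sum_congr rfl; intro k _; congr 2; omega
      · rw [ha0]; congr 2
    rw [hsplit, hPP]; ring
  exact hval ▸ h

theorem a1fun (ha0 : a 0 = φ) (ha : ∀ n : ℕ, a (n + 1) =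
      deriv (a n) + fun x => ψ x * ∑ k ∈ Finset.range n, a k x * a (n - 1 - k) x) :
    a 1 = deriv φ := by
  rw [ha 0, ha0]; funext x; simp

theorem a2fun (hφ'' : ∀ x : ℂ, deriv (deriv φ) x = (2 * x - 2 * ψ x * φ x) * φ x)
    (ha0 : a 0 = φ) (ha : ∀ n : ℕ, a (n + 1) =
      deriv (a n) + fun x => ψ x * ∑ k ∈ Finset.range n, a k x * a (n - 1 - k) x) :
    a 2 = fun x => (2*x - 2*ψ x*φ x) * φ x + ψ x * φ x^2 := by
  funext x
  rw [key1 ha 1 x, a1fun ha0 ha, hφ'' x]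
  simp only [PP, Finset.sum_range_one, show (1:ℕ)-1-0 = 0 from rfl, ha0]
  ring

theorem a3val (hφ : Differentiable ℂ φ) (hψ : Differentiable ℂ ψ)
    (hφ'' : ∀ x : ℂ, deriv (deriv φ) x = (2 * x - 2 * ψ x * φ x) * φ x)
    (ha0 : a 0 = φ) (ha : ∀ n : ℕ, a (n + 1) =
      deriv (a n) + fun x => ψ x * ∑ k ∈ Finset.range n, a k x * a (n - 1 - k) x) :
    ∀ x, a 3 x = (2*1 - (2*deriv ψ x*φ x + 2*ψ x*deriv φ x)) * φ x
        + (2*x - 2*ψ x*φ x) * deriv φ x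
        + (deriv ψ x * φ x^2 + ψ x * (2 * φ x^1 * deriv φ x))
        + ψ x * PP a 2 x := by
  intro x
  have hasψ : HasDerivAt ψ (deriv ψ x) x := (hψ x).hasDerivAt
  have hasφ : HasDerivAt φ (deriv φ x) x := (hφ x).hasDerivAt
  have hu : HasDerivAt (fun y => 2*y - 2*ψ y*φ y)
      (2*1 - (2*deriv ψ x*φ x + 2*ψ x*deriv φ x)) x :=
    ((hasDerivAt_id x).const_mul 2).sub ((hasψ.const_mul 2).mul hasφ)
  have h : HasDerivAt (fun y => (2*y - 2*ψ y*φ y) * φ y + ψ y * φ y^2)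
      ((2*1 - (2*deriv ψ x*φ x + 2*ψ x*deriv φ x)) * φ x + (2*x - 2*ψ x*φ x) * deriv φ x
        + (deriv ψ x * φ x^2 + ψ x * (2 * φ x^1 * deriv φ x))) x :=
    (hu.mul hasφ).add (hasψ.mul (hasφ.pow 2))
  rw [key1 ha 2 x, a2fun hφ'' ha0 ha, h.deriv]

theorem baseC0 (hφ : Differentiable ℂ φ) (hψ : Differentiable ℂ ψ)
    (hφ'' : ∀ x : ℂ, deriv (deriv φ) x = (2 * x - 2 * ψ x * φ x) * φ x)
    (ha0 : a 0 = φ) (ha : ∀ n : ℕ, a (n + 1) =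
      deriv (a n) + fun x => ψ x * ∑ k ∈ Finset.range n, a k x * a (n - 1 - k) x) :
    ∀ x, CC φ ψ a 0 x = 0 := by
  intro x
  have h1 := congrFun (a1fun ha0 ha) x
  have h2 := congrFun (a2fun (ψ := ψ) hφ'' ha0 ha) x
  have h3 := a3val hφ hψ hφ'' ha0 ha x
  simp only [CC, PP]
  norm_num [PP, Finset.sum_range_succ] at h3 ⊢
  rw [h3]
  simp only [h1, h2, ha0]
  ring

theorem baseQ0 (hφ : Differentiable ℂ φ) (hψ : Differentiable ℂ ψ)
    (hφ'' : ∀ x : ℂ, deriv (deriv φ) x = (2 * x - 2 * ψ x * φ x) * φ x)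
    (ha0 : a 0 = φ) (ha : ∀ n : ℕ, a (n + 1) =
      deriv (a n) + fun x => ψ x * ∑ k ∈ Finset.range n, a k x * a (n - 1 - k) x) :
    ∀ x, QQ φ ψ a 0 x = 0 := by
  intro x
  have h1 := congrFun (a1fun ha0 ha) x
  have h2 := congrFun (a2fun (ψ := ψ) hφ'' ha0 ha) x
  simp only [QQ, WW, PP]
  norm_num [Finset.sum_range_succ]
  simp only [h1, h2, ha0]
  ring

theorem baseQ1 (hφ : Differentiable ℂ φ) (hψ : Differentiable ℂ ψ)
    (hφ'' : ∀ x : ℂ, deriv (deriv φ) x = (2 * x - 2 * ψ x * φ x) * φ x)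
    (ha0 : a 0 = φ) (ha : ∀ n : ℕ, a (n + 1) =
      deriv (a n) + fun x => ψ x * ∑ k ∈ Finset.range n, a k x * a (n - 1 - k) x) :
    ∀ x, QQ φ ψ a 1 x = 0 := by
  intro x
  have h1 := congrFun (a1fun ha0 ha) x
  have h2 := congrFun (a2fun (ψ := ψ) hφ'' ha0 ha) x
  have h3 := a3val hφ hψ hφ'' ha0 ha x
  simp only [QQ, WW, PP]
  norm_num [PP, Finset.sum_range_succ] at h3 ⊢
  rw [h3]
  simp only [h1, h2, ha0]
  ring

theorem I1 (hφ : Differentiable ℂ φ) (hψ : Differentiable ℂ ψ)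
    (hψ'' : ∀ x : ℂ, deriv (deriv ψ) x = (2 * x - 2 * ψ x * φ x) * ψ x)
    (ha0 : a 0 = φ) (ha : ∀ n : ℕ, a (n + 1) =
      deriv (a n) + fun x => ψ x * ∑ k ∈ Finset.range n, a k x * a (n - 1 - k) x) :
    ∀ n x, CC φ ψ a (n+1) x = deriv (CC φ ψ a n) x + 2 * ψ x * QQ φ ψ a n x := by
  have hA := a_analytic hφ hψ ha0 ha
  have hψd : Differentiable ℂ (deriv ψ) :=
    Complex.analyticOnNhd_univ_iff_differentiable.mp
      ((Complex.analyticOnNhd_univ_iff_differentiable.mpr hψ).deriv)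
  intro n x
  have hasψ : HasDerivAt ψ (deriv ψ x) x := (hψ x).hasDerivAt
  have hasφ : HasDerivAt φ (deriv φ x) x := (hφ x).hasDerivAt
  have hasψ' : HasDerivAt (deriv ψ) ((2*x - 2*ψ x*φ x) * ψ x) x := by
    have h := (hψd x).hasDerivAt; rwa [hψ'' x] at h
  have hu : HasDerivAt (fun y => 2*y - 2*ψ y*φ y)
      (2*1 - (2*deriv ψ x*φ x + 2*ψ x*deriv φ x)) x :=
    ((hasDerivAt_id x).const_mul 2).sub ((hasψ.const_mul 2).mul hasφ)
  have big := ((((hasA hA ha (n+3) x).fun_sub (hu.fun_mul (hasA hA ha (n+1) x))).fun_sub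
      (hasψ.fun_mul (hasP hA ha0 ha (n+2) x))).fun_add
      (hasψ'.fun_mul (hasP hA ha0 ha (n+1) x))).fun_sub
      ((hasA hA ha n x).const_mul (2*((n:ℂ)+1)))
  have hD := big.deriv
  rw [show CC φ ψ a n = (fun x => a (n+3) x - (2*x - 2*ψ x*φ x) * a (n+1) x
      - ψ x * PP a (n+2) x + deriv ψ x * PP a (n+1) x - 2*((n:ℂ)+1) * a n x) from rfl, hD]
  simp only [CC, QQ, show n+3+1 = n+4 from by omega, show n+1+3 = n+4 from by omega,
    show n+1+2 = n+3 from by omega, show n+2+1 = n+3 from by omega,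
    show n+1+1 = n+2 from by omega]
  push_cast
  ring

theorem I2 (hφ'' : ∀ x : ℂ, deriv (deriv φ) x = (2 * x - 2 * ψ x * φ x) * φ x)
    (ha0 : a 0 = φ) (ha : ∀ n : ℕ, a (n + 1) =
      deriv (a n) + fun x => ψ x * ∑ k ∈ Finset.range n, a k x * a (n - 1 - k) x) :
    ∀ n x, QQ φ ψ a (n+2) x
      = ∑ k ∈ Finset.range (n+2), a k x * CC φ ψ a (n+1-k) x := by
  intro n x
  have h1 := congrFun (a1fun ha0 ha) x
  have h2 := congrFun (a2fun (ψ := ψ) hφ'' ha0 ha) x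
  have step1 : (∑ k ∈ Finset.range (n+2), a k x * CC φ ψ a (n+1-k) x)
      = (∑ k ∈ Finset.range (n+2), a k x * a (n+4-k) x)
        - (2*x - 2*ψ x*φ x) * (∑ k ∈ Finset.range (n+2), a k x * a (n+2-k) x)
        - ψ x * (∑ k ∈ Finset.range (n+2), a k x * PP a (n+3-k) x)
        + deriv ψ x * (∑ k ∈ Finset.range (n+2), a k x * PP a (n+2-k) x)
        - 2 * (∑ k ∈ Finset.range (n+2), ((n:ℂ)+2-(k:ℂ)) * (a k x * a (n+1-k) x)) := by
    rw [show (∑ k ∈ Finset.range (n+2), a k x * CC φ ψ a (n+1-k) x)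
        = ∑ k ∈ Finset.range (n+2),
          (a k x * a (n+4-k) x - (2*x - 2*ψ x*φ x) * (a k x * a (n+2-k) x)
            - ψ x * (a k x * PP a (n+3-k) x) + deriv ψ x * (a k x * PP a (n+2-k) x)
            - 2 * (((n:ℂ)+2-(k:ℂ)) * (a k x * a (n+1-k) x))) from
      Finset.sum_congr rfl (by
        intro k hk
        simp only [Finset.mem_range] at hk
        simp only [CC, show n+1-k+3 = n+4-k from by omega, show n+1-k+1 = n+2-k from by omega,
          show n+1-k+2 = n+3-k from by omega,
          show ((n+1-k : ℕ) : ℂ) = (n:ℂ)+1-(k:ℂ) from by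
            rw [Nat.cast_sub (by omega)]; push_cast; ring]
        ring)]
    simp only [Finset.sum_sub_distrib, Finset.sum_add_distrib, ← Finset.mul_sum]
  rw [step1]
  have hS1 : PP a (n+5) x = (∑ k ∈ Finset.range (n+2), a k x * a (n+4-k) x)
      + a (n+2) x * a 2 x + a (n+3) x * a 1 x + a (n+4) x * a 0 x := by
    simp only [PP, show n+5-1 = n+4 from by omega]
    rw [Finset.sum_range_succ, Finset.sum_range_succ, Finset.sum_range_succ,
      show n+4-(n+2) = 2 from by omega, show n+4-(n+3) = 1 from by omega,
      show n+4-(n+4) = 0 from by omega]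
  have hS2 : PP a (n+3) x = (∑ k ∈ Finset.range (n+2), a k x * a (n+2-k) x)
      + a (n+2) x * a 0 x := by
    simp only [PP, show n+3-1 = n+2 from by omega]
    rw [Finset.sum_range_succ, show n+2-(n+2) = 0 from by omega]
  have hW4 : WW a (n+4) x = ∑ j ∈ Finset.range (n+4), PP a (n+3-j) x * a j x := by
    simp only [WW, show n+4-1 = n+3 from by omega]
    rw [← Finset.sum_range_reflect (fun j => PP a (n+3-j) x * a j x) (n+4)]
    apply Finset.sum_congr rfl
    intro j hj
    simp only [Finset.mem_range] at hj
    rw [show n+4-1-j = n+3-j from by omega, show n+3-(n+3-j) = j from by omega]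
  have hS3 : WW a (n+4) x = (∑ k ∈ Finset.range (n+2), a k x * PP a (n+3-k) x)
      + (a 0 x * a 0 x) * a (n+2) x := by
    rw [hW4, Finset.sum_range_succ, Finset.sum_range_succ,
      show n+3-(n+3) = 0 from by omega, show n+3-(n+2) = 1 from by omega]
    have hPP0 : PP a 0 x = 0 := by simp [PP]
    have hPP1 : PP a 1 x = a 0 x * a 0 x := by
      simp [PP, Finset.sum_range_one]
    rw [hPP0, hPP1]
    rw [Finset.sum_congr rfl (fun k _ => mul_comm (PP a (n+3-k) x) (a k x))]
    ring
  have hW3 : WW a (n+3) x = ∑ j ∈ Finset.range (n+3), PP a (n+2-j) x * a j x := by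
    simp only [WW, show n+3-1 = n+2 from by omega]
    rw [← Finset.sum_range_reflect (fun j => PP a (n+2-j) x * a j x) (n+3)]
    apply Finset.sum_congr rfl
    intro j hj
    simp only [Finset.mem_range] at hj
    rw [show n+3-1-j = n+2-j from by omega, show n+2-(n+2-j) = j from by omega]
  have hS4 : WW a (n+3) x = ∑ k ∈ Finset.range (n+2), a k x * PP a (n+2-k) x := by
    rw [hW3, Finset.sum_range_succ, show n+2-(n+2) = 0 from by omega]
    have hPP0 : PP a 0 x = 0 := by simp [PP]
    rw [hPP0]
    rw [Finset.sum_congr rfl (fun k _ => mul_comm (PP a (n+2-k) x) (a k x))]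
    ring
  have hS5 : (2:ℂ) * (∑ k ∈ Finset.range (n+2), ((n:ℂ)+2-(k:ℂ)) * (a k x * a (n+1-k) x))
      = ((n:ℂ)+3) * PP a (n+2) x := by
    have hrefl : (∑ k ∈ Finset.range (n+2), ((n:ℂ)+2-(k:ℂ)) * (a k x * a (n+1-k) x))
        = ∑ k ∈ Finset.range (n+2), ((k:ℂ)+1) * (a k x * a (n+1-k) x) := by
      rw [← Finset.sum_range_reflect
        (fun k => ((n:ℂ)+2-(k:ℂ)) * (a k x * a (n+1-k) x)) (n+2)]
      apply Finset.sum_congr rfl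
      intro j hj
      simp only [Finset.mem_range] at hj
      rw [show n+2-1-j = n+1-j from by omega, show n+1-(n+1-j) = j from by omega,
        show ((n+1-j : ℕ) : ℂ) = (n:ℂ)+1-(j:ℂ) from by
          rw [Nat.cast_sub (by omega)]; push_cast; ring]
      ring
    have hPPv : PP a (n+2) x = ∑ k ∈ Finset.range (n+2), a k x * a (n+1-k) x := by
      simp only [PP, show n+2-1 = n+1 from by omega]
    rw [two_mul]
    nth_rewrite 2 [hrefl]
    rw [← Finset.sum_add_distrib, hPPv, Finset.mul_sum]
    apply Finset.sum_congr rfl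
    intro k _
    ring
  have e1 : (∑ k ∈ Finset.range (n+2), a k x * a (n+4-k) x)
      = PP a (n+5) x - a (n+2) x * a 2 x - a (n+3) x * a 1 x - a (n+4) x * a 0 x := by
    rw [hS1]; ring
  have e2 : (∑ k ∈ Finset.range (n+2), a k x * a (n+2-k) x)
      = PP a (n+3) x - a (n+2) x * a 0 x := by rw [hS2]; ring
  have e3 : (∑ k ∈ Finset.range (n+2), a k x * PP a (n+3-k) x)
      = WW a (n+4) x - (a 0 x * a 0 x) * a (n+2) x := by rw [hS3]; ring
  have ha0x : a 0 x = φ x := congrFun ha0 x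
  rw [e1, e2, e3, ← hS4]
  simp only [QQ, show n+2+3 = n+5 from by omega, show n+2+2 = n+4 from by omega,
    show n+2+1 = n+3 from by omega]
  push_cast
  linear_combination hS5 + a (n+3) x * h1 + a (n+2) x * h2
    + (a (n+4) x - (2*x - 2*ψ x*φ x)*a (n+2) x - ψ x*a (n+2) x*(a 0 x + φ x)) * ha0x

theorem CQzero (hφ : Differentiable ℂ φ) (hψ : Differentiable ℂ ψ)
    (hψ'' : ∀ x : ℂ, deriv (deriv ψ) x = (2 * x - 2 * ψ x * φ x) * ψ x)
    (hφ'' : ∀ x : ℂ, deriv (deriv φ) x = (2 * x - 2 * ψ x * φ x) * φ x)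
    (ha0 : a 0 = φ) (ha : ∀ n : ℕ, a (n + 1) =
      deriv (a n) + fun x => ψ x * ∑ k ∈ Finset.range n, a k x * a (n - 1 - k) x) :
    ∀ n, (∀ x, CC φ ψ a n x = 0) ∧ (∀ x, QQ φ ψ a n x = 0) := by
  intro n
  induction n using Nat.strong_induction_on with
  | _ n IH =>
    constructor
    · match n with
      | 0 => exact baseC0 hφ hψ hφ'' ha0 ha
      | (m+1) =>
        intro x
        rw [I1 hφ hψ hψ'' ha0 ha m x]
        have hCm : CC φ ψ a m = fun _ => (0:ℂ) := funext ((IH m (by omega)).1)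
        rw [hCm, (IH m (by omega)).2 x]
        simp
    · match n with
      | 0 => exact baseQ0 hφ hψ hφ'' ha0 ha
      | 1 => exact baseQ1 hφ hψ hφ'' ha0 ha
      | (m+2) =>
        intro x
        rw [I2 hφ'' ha0 ha m x]
        apply Finset.sum_eq_zero
        intro k hk
        simp only [Finset.mem_range] at hk
        rw [(IH (m+1-k) (by omega)).1 x, mul_zero]

/-- Main auxiliary result: the `t`-Riccati coefficient identities in flat form. -/
theorem auxMain (hφ : Differentiable ℂ φ) (hψ : Differentiable ℂ ψ)
    (hψ'' : ∀ x : ℂ, deriv (deriv ψ) x = (2 * x - 2 * ψ x * φ x) * ψ x)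
    (hφ'' : ∀ x : ℂ, deriv (deriv φ) x = (2 * x - 2 * ψ x * φ x) * φ x)
    (ha0 : a 0 = φ) (ha : ∀ n : ℕ, a (n + 1) =
      deriv (a n) + fun x => ψ x * ∑ k ∈ Finset.range n, a k x * a (n - 1 - k) x) :
    (∀ x, a 2 x = (2*x - 2*ψ x*φ x) * φ x + ψ x * φ x^2) ∧
    (∀ (n : ℕ) (x : ℂ), a (n+3) x = (2*x - 2*ψ x*φ x) * a (n+1) x
      + ψ x * (∑ k ∈ Finset.range (n+2), a k x * a (n+1-k) x)
      - deriv ψ x * (∑ k ∈ Finset.range (n+1), a k x * a (n-k) x)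
      + 2*((n:ℂ)+1) * a n x) := by
  constructor
  · exact fun x => congrFun (a2fun (ψ := ψ) hφ'' ha0 ha) x
  · intro n x
    have h := (CQzero hφ hψ hψ'' hφ'' ha0 ha n).1 x
    simp only [CC] at h
    have hPP2 : PP a (n+2) x = ∑ k ∈ Finset.range (n+2), a k x * a (n+1-k) x := by
      rfl
    have hPP1 : PP a (n+1) x = ∑ k ∈ Finset.range (n+1), a k x * a (n-k) x := by
      rfl
    rw [hPP2, hPP1] at h
    linear_combination h
end Main


/-- **Proposition 2.6, coefficientwise form.** Under the conditions
`ψ''/ψ = φ''/φ = −2ψφ + 2x` and `φ'ψ − φψ' = 2α`, the generating functions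
`F = ∑ a_n t^{-n}`, `G = ∑ b_n t^{-n}` formally satisfy the Riccati equations in `t`,
`2t F_t = −(ψ' − tψ)F² + ((ψ''/ψ)t + 2 − t³)F + t²(φ' + tφ)` (and symmetrically for `G`),
expressed here as the coefficient identities of each power `t^{-n}` after multiplication
by `ψ` (resp. `φ`). -/
theorem riccati_t_coefficientwise
    (α : ℂ) (φ ψ : ℂ → ℂ) (hφ : Differentiable ℂ φ) (hψ : Differentiable ℂ ψ)
    (hψ'' : ∀ x : ℂ, deriv (deriv ψ) x = (2 * x - 2 * ψ x * φ x) * ψ x)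
    (hφ'' : ∀ x : ℂ, deriv (deriv φ) x = (2 * x - 2 * ψ x * φ x) * φ x)
    (hW : ∀ x : ℂ, deriv φ x * ψ x - φ x * deriv ψ x = 2 * α)
    (a b : ℕ → ℂ → ℂ)
    (ha0 : a 0 = φ)
    (ha : ∀ n : ℕ, a (n + 1) =
      deriv (a n) + fun x => ψ x * ∑ k ∈ Finset.range n, a k x * a (n - 1 - k) x)
    (hb0 : b 0 = ψ)
    (hb : ∀ n : ℕ, b (n + 1) =
      deriv (b n) + fun x => φ x * ∑ k ∈ Finset.range n, b k x * b (n - 1 - k) x) :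
    (∀ x : ℂ, ψ x * a 2 x = (ψ x) ^ 2 * (φ x) ^ 2 + deriv (deriv ψ) x * φ x)
      ∧
    (∀ (n : ℕ) (x : ℂ),
      ψ x * a (n + 3) x =
        (ψ x) ^ 2 * (∑ k ∈ Finset.range (n + 2), a k x * a (n + 1 - k) x)
          - ψ x * deriv ψ x * (∑ k ∈ Finset.range (n + 1), a k x * a (n - k) x)
          + deriv (deriv ψ) x * a (n + 1) x
          + 2 * ((n : ℂ) + 1) * ψ x * a n x)
      ∧
    (∀ x : ℂ, φ x * b 2 x = (φ x) ^ 2 * (ψ x) ^ 2 + deriv (deriv φ) x * ψ x)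
      ∧
    (∀ (n : ℕ) (x : ℂ),
      φ x * b (n + 3) x =
        (φ x) ^ 2 * (∑ k ∈ Finset.range (n + 2), b k x * b (n + 1 - k) x)
          - φ x * deriv φ x * (∑ k ∈ Finset.range (n + 1), b k x * b (n - k) x)
          + deriv (deriv φ) x * b (n + 1) x
          + 2 * ((n : ℂ) + 1) * φ x * b n x) := by
  have hA := auxMain hφ hψ hψ'' hφ'' ha0 ha
  have hψ''' : ∀ x : ℂ, deriv (deriv φ) x = (2 * x - 2 * φ x * ψ x) * φ x := by
    intro x; rw [hφ'' x]; ring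
  have hφ''' : ∀ x : ℂ, deriv (deriv ψ) x = (2 * x - 2 * φ x * ψ x) * ψ x := by
    intro x; rw [hψ'' x]; ring
  have hB := auxMain hψ hφ hψ''' hφ''' hb0 hb
  refine ⟨?_, ?_, ?_, ?_⟩
  · intro x
    rw [hA.1 x, hψ'' x]; ring
  · intro n x
    have h := hA.2 n x
    rw [hψ'' x]
    linear_combination ψ x * h
  · intro x
    rw [hB.1 x, hφ'' x]; ring
  · intro n x
    have h := hB.2 n x
    rw [hφ'' x]
    linear_combination φ x * h
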